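/- Let n ≥ 2 and let m₁ < m₂ < … < m_n be positive reals with m_n ≤ (3/2)·m₁. For i = 1, …, n set δᵢ = m_n/mᵢ − 1/2 and Δᵢ = 1 − (mᵢ·(1 − δᵢ))/m₁ = 1 − ((3/2)mᵢ − m_n)/m₁, and define C₁ = 2m_n·(1 − δ₁) + ∑_{i=1}^{n−1} mᵢ·(1 + δᵢ)·(Δᵢ − Δ_{i+1}) + m_n·(1 + δ_n)·Δ_n. Then (2m_n − C₁)/(2m_n − (3/2)·m₁) ≥ 0.476. -/

import Mathlib

private lemma telescope_Ico (g : ℕ → ℝ) {n : ℕ} (hn : 1 ≤ n) :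
    ∑ i ∈ Finset.Ico 1 n, (g (i + 1) - g i) = g n - g 1 := by
  induction n with
  | zero => omega
  | succ k ih =>
    rcases Nat.lt_or_ge 1 (k + 1) with h | h
    · have hk : 1 ≤ k := by omega
      rw [Finset.sum_Ico_succ_top hk, ih hk]; ring
    · have : k = 0 := by omega
      subst this; simp

set_option maxHeartbeats 1000000 in
/-- Case 1 in the proof of Lemma V.2: with `m₁ < ⋯ < m_n ≤ (3/2)m₁`, the
worst-case capacity `C₁` provisioned for a type-`m₁` customer under the
pessimistic setting satisfies `(2m_n - C₁)/(2m_n - (3/2)m₁) ≥ 0.476`. -/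
theorem pessimistic_capacity_case1 (n : ℕ) (hn : 2 ≤ n) (m : ℕ → ℝ)
    (hpos : ∀ i, 1 ≤ i → i ≤ n → 0 < m i)
    (hmono : ∀ i j, 1 ≤ i → i < j → j ≤ n → m i < m j)
    (hclose : m n ≤ (3 / 2) * m 1) :
    let δ := fun i => m n / m i - 1 / 2
    let Δ := fun i => 1 - (m i * (1 - δ i)) / m 1
    let C₁ := 2 * m n * (1 - δ 1) +
      (∑ i ∈ Finset.Ico 1 n, m i * (1 + δ i) * (Δ i - Δ (i + 1))) +
      m n * (1 + δ n) * Δ n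
    (2 * m n - C₁) / (2 * m n - (3 / 2) * m 1) ≥ 0.476 := by
  intro δ Δ C₁
  set a := m 1 with ha_def
  set M := m n with hM_def
  have ha : 0 < a := hpos 1 le_rfl (by omega)
  have haM : a < M := hmono 1 n le_rfl (by omega) le_rfl
  have hMpos : 0 < M := ha.trans haM
  -- rewrite each summand
  have hsum_eq : ∀ i ∈ Finset.Ico 1 n,
      m i * (1 + δ i) * (Δ i - Δ (i + 1)) =
        (m i / 2 + M) * (3 / (2 * a)) * (m (i + 1) - m i) := by
    intro i hi
    rw [Finset.mem_Ico] at hi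
    have hmi : 0 < m i := hpos i hi.1 (by omega)
    have hmi1 : 0 < m (i + 1) := hpos (i + 1) (by omega) (by omega)
    simp only [δ, Δ]
    rw [← ha_def, ← hM_def]
    field_simp
    ring
  have hC : C₁ = 2 * M * (1 - δ 1) +
      (∑ i ∈ Finset.Ico 1 n, (m i / 2 + M) * (3 / (2 * a)) * (m (i + 1) - m i)) +
      M * (1 + δ n) * Δ n := by
    simp only [C₁]
    rw [Finset.sum_congr rfl hsum_eq]
  -- bound each summand by a telescoping term
  have hsum_le : (∑ i ∈ Finset.Ico 1 n, (m i / 2 + M) * (3 / (2 * a)) * (m (i + 1) - m i))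
      ≤ ∑ i ∈ Finset.Ico 1 n,
        (3 / (2 * a)) * (((m (i+1))^2 / 4 + M * m (i+1)) - ((m i)^2 / 4 + M * m i)) := by
    apply Finset.sum_le_sum
    intro i hi
    rw [Finset.mem_Ico] at hi
    have hlt : m i < m (i + 1) := hmono i (i + 1) hi.1 (by omega) (by omega)
    have h2a : 0 < 3 / (2 * a) := by positivity
    nlinarith [sq_nonneg (m (i + 1) - m i), h2a.le, mul_le_mul_of_nonneg_left
      (sq_nonneg (m (i+1) - m i)) h2a.le]
  have htel : ∑ i ∈ Finset.Ico 1 n,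
      (3 / (2 * a)) * (((m (i+1))^2 / 4 + M * m (i+1)) - ((m i)^2 / 4 + M * m i))
      = (3 / (2 * a)) * ((M^2 / 4 + M * M) - (a^2 / 4 + M * a)) := by
    rw [← Finset.mul_sum, telescope_Ico (fun i => (m i)^2 / 4 + M * m i) (by omega)]
  -- bound C₁
  have hC₁ : C₁ ≤ 2 * M * (1 - δ 1)
      + (3 / (2 * a)) * ((M^2 / 4 + M * M) - (a^2 / 4 + M * a))
      + M * (1 + δ n) * Δ n := by
    rw [hC]
    have := hsum_le.trans_eq htel
    linarith
  have hδ1 : δ 1 = M / a - 1 / 2 := rfl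
  have hδn : δ n = M / M - 1 / 2 := rfl
  have hΔn : Δ n = 1 - (M * (1 - δ n)) / a := rfl
  have hB : 2 * M * (1 - δ 1)
      + (3 / (2 * a)) * ((M^2 / 4 + M * M) - (a^2 / 4 + M * a))
      + M * (1 + δ n) * Δ n
      = 2 * M - (7 * M^2 - 8 * M * a + 3 * a^2) / (8 * a) := by
    rw [hδ1, hδn, hΔn, hδn]
    field_simp
    ring
  have hkey : 2 * M - C₁ ≥ (7 * M^2 - 8 * M * a + 3 * a^2) / (8 * a) := by
    rw [hB] at hC₁; linarith
  have hD : 0 < 2 * M - 3 / 2 * a := by linarith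
  rw [ge_iff_le, le_div_iff₀ hD]
  have h8a : 0 < 8 * a := by linarith
  have : 0.476 * (2 * M - 3 / 2 * a) ≤ (7 * M^2 - 8 * M * a + 3 * a^2) / (8 * a) := by
    rw [le_div_iff₀ h8a, show (0.476 : ℝ) = 476 / 1000 by norm_num]
    nlinarith [sq_nonneg (14000 * M - 15616 * a), sq_nonneg a]
  linarith
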